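/- Let T be an unbounded self-adjoint operator on a complex Hilbert space H. On H × H define A with domain D(T) × D(T) by A(x, y) = (Ty, Tx), and B with domain D(T) × D(T) by B(x, y) = (Tx, −Ty). Then A and B are self-adjoint with D(A) = D(B), the compositions A ∘ A and B ∘ B are equal (both equal to (x, y) ↦ ((T∘T)x, (T∘T)y) on D(T∘T) × D(T∘T)), so A ∘ A − B ∘ B is the zero operator on its domain, while A ∘ B − B ∘ A has domain D(T∘T) × D(T∘T), is given by (x, y) ↦ (−2(T∘T)y, 2(T∘T)x), and is unbounded. -/

import Mathlib

/- Unbounded (partially defined) operators on a complex Hilbert space are modelled by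
Mathlib's `LinearPMap` (`H →ₗ.[ℂ] H`).  `T†` is the adjoint, `T.IsClosed` means the graph
of `T` is closed, and `f - g` is the difference with domain `D(f) ⊓ D(g)`. -/

noncomputable section

open LinearPMap

/-- The composition `S ∘ T` of two partially defined linear operators, with its natural
(maximal) domain `{x ∈ D(T) : T x ∈ D(S)}`, acting by `x ↦ S (T x)`. -/
def pComp {R E F G : Type*} [Ring R] [AddCommGroup E] [Module R E]
    [AddCommGroup F] [Module R F] [AddCommGroup G] [Module R G]
    (S : F →ₗ.[R] G) (T : E →ₗ.[R] F) : E →ₗ.[R] G where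
  domain := (S.domain.comap T.toFun).map T.domain.subtype
  toFun := (S.toFun.comp (T.toFun.restrict (q := S.domain) fun _ hx => hx)).comp
    (Submodule.equivMapOfInjective T.domain.subtype T.domain.injective_subtype
      (S.domain.comap T.toFun)).symm.toLinearMap

/-- A partially defined operator is bounded if `‖T x‖ ≤ C‖x‖` on its domain for some `C ≥ 0`. -/
def IsBddOp {H : Type*} [NormedAddCommGroup H] [InnerProductSpace ℂ H]
    (T : H →ₗ.[ℂ] H) : Prop :=
  ∃ C : ℝ, 0 ≤ C ∧ ∀ x : T.domain, ‖T x‖ ≤ C * ‖(x : H)‖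

/-- A partially defined operator is positive if `⟪T x, x⟫` is real and nonnegative
for every `x` in its domain. -/
def IsPosOp {H : Type*} [NormedAddCommGroup H] [InnerProductSpace ℂ H]
    (T : H →ₗ.[ℂ] H) : Prop :=
  ∀ x : T.domain, 0 ≤ (inner ℂ (T x) ((x : H)) : ℂ).re ∧ (inner ℂ (T x) ((x : H)) : ℂ).im = 0

/-- A (bundled) complex Hilbert space. -/
structure HilbertC where
  carrier : Type
  [normed : NormedAddCommGroup carrier]
  [ips : InnerProductSpace ℂ carrier]
  [complete : CompleteSpace carrier]

attribute [instance] HilbertC.normed HilbertC.ips HilbertC.complete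

/-- The product Hilbert space `H × H` (with inner product
`⟪(x₁,y₁),(x₂,y₂)⟫ = ⟪x₁,x₂⟫ + ⟪y₁,y₂⟫`), i.e. the `L²`-product `WithLp 2 (H × H)`. -/
abbrev HxH (H : Type) [NormedAddCommGroup H] [InnerProductSpace ℂ H] : Type :=
  WithLp 2 (H × H)

/-- The canonical linear identification of the product Hilbert space `HxH H` with `H × H`. -/
abbrev prodE (H : Type) [NormedAddCommGroup H] [InnerProductSpace ℂ H] :
    HxH H ≃ₗ[ℂ] H × H := WithLp.linearEquiv 2 ℂ (H × H)

/-! ### Auxiliary lemmas -/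

local notation "⟪" x ", " y "⟫" => @inner ℂ _ _ x y

theorem LinearPMap.apply_congr {R E F : Type*} [Ring R] [AddCommGroup E] [Module R E]
    [AddCommGroup F] [Module R F] {f g : E →ₗ.[R] F} (h : f = g) (x : f.domain)
    (hx : (x : E) ∈ g.domain) : f x = g ⟨x, hx⟩ := by
  subst h; congr 1

theorem LinearPMap.val_congr {R E F : Type*} [Ring R] [AddCommGroup E] [Module R E]
    [AddCommGroup F] [Module R F] (f : E →ₗ.[R] F) {a b : E} (h : a = b)
    (ha : a ∈ f.domain) (hb : b ∈ f.domain) : f ⟨a, ha⟩ = f ⟨b, hb⟩ := by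
  subst h; rfl

theorem LinearPMap.map_neg' {R E F : Type*} [Ring R] [AddCommGroup E] [Module R E]
    [AddCommGroup F] [Module R F] (f : E →ₗ.[R] F) {a : E} (h : -a ∈ f.domain)
    (h' : a ∈ f.domain) : f ⟨-a, h⟩ = -f ⟨a, h'⟩ := by
  rw [show (⟨-a, h⟩ : f.domain) = -⟨a, h'⟩ from Subtype.ext rfl]
  exact f.map_neg _

section pCompLemmas

variable {R E F G : Type*} [Ring R] [AddCommGroup E] [Module R E]
    [AddCommGroup F] [Module R F] [AddCommGroup G] [Module R G]
    {S : F →ₗ.[R] G} {T : E →ₗ.[R] F}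

theorem mem_pComp_domain {x : E} :
    x ∈ (pComp S T).domain ↔ ∃ hx : x ∈ T.domain, T ⟨x, hx⟩ ∈ S.domain := by
  constructor
  · rintro ⟨y, hy, rfl⟩
    exact ⟨y.2, by simpa [LinearPMap.toFun_eq_coe, Subtype.coe_eta] using hy⟩
  · rintro ⟨hx, h2⟩
    exact ⟨⟨x, hx⟩, h2, rfl⟩

theorem pComp_apply (x : E) (hx : x ∈ T.domain) (h2 : T ⟨x, hx⟩ ∈ S.domain)
    (hmem : x ∈ (pComp S T).domain) :
    pComp S T ⟨x, hmem⟩ = S ⟨T ⟨x, hx⟩, h2⟩ := by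
  have he : (Submodule.equivMapOfInjective T.domain.subtype T.domain.injective_subtype
      (S.domain.comap T.toFun)).symm ⟨x, hmem⟩ = ⟨⟨x, hx⟩, h2⟩ := by
    rw [LinearEquiv.symm_apply_eq]
    ext
    rfl
  have hrw : pComp S T ⟨x, hmem⟩ = S.toFun ((T.toFun.restrict (q := S.domain) fun _ hx => hx)
      ((Submodule.equivMapOfInjective T.domain.subtype T.domain.injective_subtype
      (S.domain.comap T.toFun)).symm ⟨x, hmem⟩)) := rfl
  rw [hrw, he]
  rfl

end pCompLemmas

section SelfAdjointHelpers

variable {H : Type} [NormedAddCommGroup H] [InnerProductSpace ℂ H] [CompleteSpace H]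

open LinearPMap in
theorem sa_symm {T : H →ₗ.[ℂ] H} (hT_sa : T† = T) (u v : T.domain) :
    ⟪T u, (v : H)⟫ = ⟪(u : H), T v⟫ := by
  have hTd : Dense (T.domain : Set H) := (isSelfAdjoint_def.mpr hT_sa).dense_domain
  have h1 := LinearPMap.adjoint_isFormalAdjoint hTd
    (⟨(u : H), by rw [hT_sa]; exact u.2⟩ : T†.domain) v
  rwa [LinearPMap.apply_congr hT_sa ⟨(u : H), by rw [hT_sa]; exact u.2⟩ u.2,
    Subtype.coe_eta] at h1

open LinearPMap in
theorem sa_mem_and_eq {T : H →ₗ.[ℂ] H} (hT_sa : T† = T) {y w : H}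
    (h : ∀ u : T.domain, ⟪w, (u : H)⟫ = ⟪y, T u⟫) :
    ∃ hy : y ∈ T.domain, T ⟨y, hy⟩ = w := by
  have hTd : Dense (T.domain : Set H) := (isSelfAdjoint_def.mpr hT_sa).dense_domain
  have hmem : y ∈ T†.domain := mem_adjoint_domain_of_exists y ⟨w, h⟩
  have hval : T† ⟨y, hmem⟩ = w := adjoint_apply_eq hTd ⟨y, hmem⟩ h
  have hmem' : y ∈ T.domain := by rw [← hT_sa]; exact hmem
  refine ⟨hmem', ?_⟩
  rw [← hval, LinearPMap.apply_congr hT_sa ⟨y, hmem⟩ hmem']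

open LinearPMap in
theorem sa_isClosed {T : H →ₗ.[ℂ] H} (hT_sa : T† = T) : T.IsClosed := by
  apply IsSeqClosed.isClosed
  intro seq p hmem htend
  choose a ha1 ha2 using fun n => T.mem_graph_iff.mp (hmem n)
  have h1 : Filter.Tendsto (fun n => (seq n).1) Filter.atTop (nhds p.1) :=
    (continuous_fst.tendsto p).comp htend
  have h2 : Filter.Tendsto (fun n => (seq n).2) Filter.atTop (nhds p.2) :=
    (continuous_snd.tendsto p).comp htend
  have key : ∀ x : T.domain, ⟪p.2, (x : H)⟫ = ⟪p.1, T x⟫ := by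
    intro x
    have hn : ∀ n, ⟪(seq n).2, (x : H)⟫ = ⟪(seq n).1, T x⟫ := by
      intro n
      rw [← (ha1 n), ← (ha2 n)]
      exact sa_symm hT_sa (a n) x
    have t1 : Filter.Tendsto (fun n => ⟪(seq n).2, (x : H)⟫) Filter.atTop
        (nhds ⟪p.2, (x : H)⟫) := h2.inner tendsto_const_nhds
    have t2 : Filter.Tendsto (fun n => ⟪(seq n).1, T x⟫) Filter.atTop
        (nhds ⟪p.1, T x⟫) := h1.inner tendsto_const_nhds
    exact tendsto_nhds_unique (by simpa only [hn] using t1) t2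
  obtain ⟨hy, hval⟩ := sa_mem_and_eq hT_sa key
  exact T.mem_graph_iff.mpr ⟨⟨p.1, hy⟩, rfl, hval.symm ▸ rfl⟩

open LinearPMap in
theorem dense_sq {T : H →ₗ.[ℂ] H} (hT_sa : T† = T) :
    Dense ((pComp T T).domain : Set H) := by
  have hTd : Dense (T.domain : Set H) := (isSelfAdjoint_def.mpr hT_sa).dense_domain
  set e := WithLp.linearEquiv 2 ℂ (H × H) with he
  set Γ : Submodule ℂ (WithLp 2 (H × H)) := T.graph.map (e.symm : H × H →ₗ[ℂ] _) with hΓ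
  have hG : IsClosed (Γ : Set (WithLp 2 (H × H))) := by
    have h1 : (Γ : Set (WithLp 2 (H × H))) =
        (WithLp.prodContinuousLinearEquiv 2 ℂ H H).toHomeomorph.symm ''
          (T.graph : Set (H × H)) := by
      rw [hΓ, Submodule.map_coe]; rfl
    rw [h1, Homeomorph.isClosed_image]
    exact sa_isClosed hT_sa
  haveI : CompleteSpace Γ := hG.completeSpace_coe
  have hbot : ((pComp T T).domain)ᗮ = ⊥ := by
    rw [Submodule.eq_bot_iff]
    intro z hz
    obtain ⟨p, hp, q, hq, hv⟩ := Γ.exists_add_mem_mem_orthogonal (e.symm (z, 0))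
    obtain ⟨g, hg, rfl⟩ := hp
    obtain ⟨x, hx1, hx2⟩ := T.mem_graph_iff.mp hg
    have hgx : g = ((x : H), T x) := by rw [hx1, hx2]
    subst hgx
    have hqe : q = e.symm (z - (x : H), -(T x)) := by
      have h' : q = e.symm (z, 0) - e.symm ((x : H), T x) := eq_sub_of_add_eq' hv.symm
      rw [h', ← _root_.map_sub]
      congr 1
      rw [Prod.mk_sub_mk, zero_sub]
    have hrel : ∀ u : T.domain, ⟪(u : H), z - (x : H)⟫ + ⟪T u, -(T x)⟫ = 0 := by
      intro u
      have hmem : e.symm ((u : H), T u) ∈ Γ :=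
        ⟨((u : H), T u), T.mem_graph_iff.mpr ⟨u, rfl, rfl⟩, rfl⟩
      have h2 := (Submodule.mem_orthogonal Γ q).mp hq _ hmem
      rw [hqe] at h2
      have h3 : (inner ℂ (e.symm ((u : H), T u)) (e.symm (z - (x : H), -(T x)) :
          WithLp 2 (H × H)) : ℂ) = ⟪(u : H), z - (x : H)⟫ + ⟪T u, -(T x)⟫ := rfl
      rwa [h3] at h2
    have hrel' : ∀ u : T.domain, ⟪z - (x : H), (u : H)⟫ = ⟪T x, T u⟫ := by
      intro u
      have h0 := hrel u
      rw [inner_neg_right, add_neg_eq_zero] at h0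
      calc ⟪z - (x : H), (u : H)⟫
          = starRingEnd ℂ ⟪(u : H), z - (x : H)⟫ := (inner_conj_symm _ _).symm
        _ = starRingEnd ℂ ⟪T u, T x⟫ := by rw [h0]
        _ = ⟪T x, T u⟫ := inner_conj_symm _ _
    obtain ⟨hTx, hTTx⟩ := sa_mem_and_eq hT_sa hrel'
    have hxD : (x : H) ∈ (pComp T T).domain := mem_pComp_domain.mpr ⟨x.2, by
      simpa [Subtype.coe_eta] using hTx⟩
    have hzx : ⟪z, (x : H)⟫ = 0 :=
      inner_eq_zero_symm.mp ((Submodule.mem_orthogonal _ z).mp hz _ hxD)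
    have hx0 : (x : H) = 0 := by
      have h0 := hrel' x
      rw [inner_sub_left, hzx, inner_self_eq_norm_sq_to_K, inner_self_eq_norm_sq_to_K] at h0
      have h1 : -(‖(x : H)‖ : ℝ) ^ 2 = (‖T x‖ : ℝ) ^ 2 := by
        have h5 := congrArg Complex.re h0
        simpa [← Complex.ofReal_pow] using h5
      have h2 : ‖(x : H)‖ = 0 := by nlinarith [sq_nonneg ‖(x : H)‖, sq_nonneg ‖T x‖]
      exact norm_eq_zero.mp h2
    have hx00 : x = 0 := Subtype.ext hx0
    have hz0 : ∀ u : T.domain, ⟪(u : H), z⟫ = 0 := by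
      intro u
      have h0 := hrel u
      rw [hx00] at h0
      simpa using h0
    exact hTd.eq_zero_of_inner_left ℂ fun v hv => inner_eq_zero_symm.mp (hz0 ⟨v, hv⟩)
  rw [Submodule.dense_iff_topologicalClosure_eq_top, ← Submodule.orthogonal_orthogonal_eq_closure,
    hbot, Submodule.bot_orthogonal_eq_top]

omit [CompleteSpace H] in
theorem dense_prod_comap {D1 D2 : Submodule ℂ H} (h1 : Dense (D1 : Set H))
    (h2 : Dense (D2 : Set H)) :
    Dense (((Submodule.prod D1 D2).comap (prodE H).toLinearMap : Submodule ℂ (HxH H)) :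
      Set (HxH H)) := by
  have hD : Dense ((D1 : Set H) ×ˢ (D2 : Set H)) := h1.prod h2
  have himg := ((WithLp.prodContinuousLinearEquiv 2 ℂ H H).symm.toHomeomorph
    ).isDenseEmbedding.dense_image.mpr hD
  have hset : (((Submodule.prod D1 D2).comap (prodE H).toLinearMap :
      Submodule ℂ (HxH H)) : Set (HxH H)) =
      (WithLp.prodContinuousLinearEquiv 2 ℂ H H).symm.toHomeomorph ''
        ((D1 : Set H) ×ˢ (D2 : Set H)) := by
    ext v
    constructor
    · rintro ⟨ha, hb⟩
      exact ⟨(prodE H) v, ⟨ha, hb⟩, rfl⟩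
    · rintro ⟨w, hw, rfl⟩
      exact ⟨hw.1, hw.2⟩
  rw [hset]
  exact himg

end SelfAdjointHelpers
section ABHelpers

variable {H : Type} [NormedAddCommGroup H] [InnerProductSpace ℂ H] [CompleteSpace H]

open LinearPMap in
theorem adjoint_eq_A {T : H →ₗ.[ℂ] H} (hT_sa : T† = T)
    {A : HxH H →ₗ.[ℂ] HxH H}
    (hAdom : A.domain = (Submodule.prod T.domain T.domain).comap (prodE H).toLinearMap)
    (hA : ∀ x : A.domain, ∀ (h1 : (prodE H (x : HxH H)).1 ∈ T.domain)
        (h2 : (prodE H (x : HxH H)).2 ∈ T.domain),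
      prodE H (A x) = (T ⟨(prodE H (x : HxH H)).2, h2⟩, T ⟨(prodE H (x : HxH H)).1, h1⟩)) :
    A† = A := by
  have hTd : Dense (T.domain : Set H) := (isSelfAdjoint_def.mpr hT_sa).dense_domain
  have hAd : Dense (A.domain : Set (HxH H)) := by
    rw [hAdom]; exact dense_prod_comap hTd hTd
  have memA : ∀ {v : HxH H}, v ∈ A.domain →
      (prodE H v).1 ∈ T.domain ∧ (prodE H v).2 ∈ T.domain := by
    intro v hv
    rw [hAdom] at hv
    exact hv
  have hfa : A.IsFormalAdjoint A := by
    intro x y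
    obtain ⟨hx1, hx2⟩ := memA x.2
    obtain ⟨hy1, hy2⟩ := memA y.2
    have hxv := hA x hx1 hx2
    have hyv := hA y hy1 hy2
    have c1 : (prodE H (A x)).1 = T ⟨(prodE H (x : HxH H)).2, hx2⟩ := by rw [hxv]
    have c2 : (prodE H (A x)).2 = T ⟨(prodE H (x : HxH H)).1, hx1⟩ := by rw [hxv]
    have d1 : (prodE H (A y)).1 = T ⟨(prodE H (y : HxH H)).2, hy2⟩ := by rw [hyv]
    have d2 : (prodE H (A y)).2 = T ⟨(prodE H (y : HxH H)).1, hy1⟩ := by rw [hyv]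
    calc ⟪A x, (y : HxH H)⟫
        = ⟪(prodE H (A x)).1, (prodE H (y : HxH H)).1⟫ +
          ⟪(prodE H (A x)).2, (prodE H (y : HxH H)).2⟫ := rfl
      _ = ⟪T ⟨(prodE H (x : HxH H)).2, hx2⟩, (prodE H (y : HxH H)).1⟫ +
          ⟪T ⟨(prodE H (x : HxH H)).1, hx1⟩, (prodE H (y : HxH H)).2⟫ := by rw [c1, c2]
      _ = ⟪(prodE H (x : HxH H)).2, T ⟨(prodE H (y : HxH H)).1, hy1⟩⟫ +
          ⟪(prodE H (x : HxH H)).1, T ⟨(prodE H (y : HxH H)).2, hy2⟩⟫ := by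
            rw [sa_symm hT_sa ⟨_, hx2⟩ ⟨_, hy1⟩, sa_symm hT_sa ⟨_, hx1⟩ ⟨_, hy2⟩]
      _ = ⟪(prodE H (x : HxH H)).1, (prodE H (A y)).1⟫ +
          ⟪(prodE H (x : HxH H)).2, (prodE H (A y)).2⟫ := by rw [d1, d2]; ring
      _ = ⟪(x : HxH H), A y⟫ := rfl
  refine le_antisymm ?_ (hfa.le_adjoint hAd)
  have main : ∀ p : A†.domain, ∃ hm : (p : HxH H) ∈ A.domain, A† p = A ⟨(p : HxH H), hm⟩ := by
    intro p
    have key := LinearPMap.adjoint_isFormalAdjoint hAd p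
    have rel1 : ∀ u : T.domain, ⟪(prodE H (A† p)).1, (u : H)⟫ =
        ⟪(prodE H (p : HxH H)).2, T u⟫ := by
      intro u
      have m1 : ((prodE H).symm ((u : H), 0) : HxH H) ∈ A.domain := by
        rw [hAdom]; exact ⟨u.2, T.domain.zero_mem⟩
      have hv := hA ⟨_, m1⟩ (u.2 : ((prodE H) ((prodE H).symm ((u : H), 0))).1 ∈ T.domain)
        T.domain.zero_mem
      have hz : T ⟨((prodE H) ((prodE H).symm ((u : H), (0 : H)))).2, T.domain.zero_mem⟩
          = 0 := by
        rw [show (⟨((prodE H) ((prodE H).symm ((u : H), (0 : H)))).2, T.domain.zero_mem⟩ :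
          T.domain) = 0 from rfl]
        exact T.map_zero
      have hTu : T ⟨((prodE H) ((prodE H).symm ((u : H), (0 : H)))).1, u.2⟩ = T u := by
        exact T.val_congr rfl _ _
      have hk := key ⟨_, m1⟩
      calc ⟪(prodE H (A† p)).1, (u : H)⟫
          = ⟪(prodE H (A† p)).1, (u : H)⟫ + ⟪(prodE H (A† p)).2, (0 : H)⟫ := by
            rw [inner_zero_right, add_zero]
        _ = ⟪A† p, ((prodE H).symm ((u : H), 0) : HxH H)⟫ := rfl
        _ = ⟪(p : HxH H), A ⟨_, m1⟩⟫ := hk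
        _ = ⟪(prodE H (p : HxH H)).1, (prodE H (A ⟨_, m1⟩)).1⟫ +
            ⟪(prodE H (p : HxH H)).2, (prodE H (A ⟨_, m1⟩)).2⟫ := rfl
        _ = ⟪(prodE H (p : HxH H)).2, T u⟫ := by
            rw [hv]
            simp only [hz, hTu]
            rw [inner_zero_right, zero_add]
    have rel2 : ∀ u : T.domain, ⟪(prodE H (A† p)).2, (u : H)⟫ =
        ⟪(prodE H (p : HxH H)).1, T u⟫ := by
      intro u
      have m1 : ((prodE H).symm ((0 : H), (u : H)) : HxH H) ∈ A.domain := by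
        rw [hAdom]; exact ⟨T.domain.zero_mem, u.2⟩
      have hv := hA ⟨_, m1⟩ T.domain.zero_mem
        (u.2 : ((prodE H) ((prodE H).symm ((0 : H), (u : H)))).2 ∈ T.domain)
      have hz : T ⟨((prodE H) ((prodE H).symm ((0 : H), (u : H)))).1, T.domain.zero_mem⟩
          = 0 := by
        rw [show (⟨((prodE H) ((prodE H).symm ((0 : H), (u : H)))).1, T.domain.zero_mem⟩ :
          T.domain) = 0 from rfl]
        exact T.map_zero
      have hTu : T ⟨((prodE H) ((prodE H).symm ((0 : H), (u : H)))).2, u.2⟩ = T u := by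
        exact T.val_congr rfl _ _
      have hk := key ⟨_, m1⟩
      calc ⟪(prodE H (A† p)).2, (u : H)⟫
          = ⟪(prodE H (A† p)).1, (0 : H)⟫ + ⟪(prodE H (A† p)).2, (u : H)⟫ := by
            rw [inner_zero_right, zero_add]
        _ = ⟪A† p, ((prodE H).symm ((0 : H), (u : H)) : HxH H)⟫ := rfl
        _ = ⟪(p : HxH H), A ⟨_, m1⟩⟫ := hk
        _ = ⟪(prodE H (p : HxH H)).1, (prodE H (A ⟨_, m1⟩)).1⟫ +
            ⟪(prodE H (p : HxH H)).2, (prodE H (A ⟨_, m1⟩)).2⟫ := rfl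
        _ = ⟪(prodE H (p : HxH H)).1, T u⟫ := by
            rw [hv]
            simp only [hz, hTu]
            rw [inner_zero_right, add_zero]
    obtain ⟨hm2, hv2⟩ := sa_mem_and_eq hT_sa rel1
    obtain ⟨hm1, hv1⟩ := sa_mem_and_eq hT_sa rel2
    have hm : (p : HxH H) ∈ A.domain := by rw [hAdom]; exact ⟨hm1, hm2⟩
    refine ⟨hm, ?_⟩
    apply (prodE H).injective
    rw [hA ⟨(p : HxH H), hm⟩ hm1 hm2]
    exact Prod.ext (by rw [hv2]) (by rw [hv1])
  refine ⟨fun v hv => (main ⟨v, hv⟩).1, ?_⟩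
  intro x y hxy
  obtain ⟨hm, hv⟩ := main x
  rw [hv]
  exact A.val_congr hxy _ _

open LinearPMap in
theorem adjoint_eq_B {T : H →ₗ.[ℂ] H} (hT_sa : T† = T)
    {B : HxH H →ₗ.[ℂ] HxH H}
    (hBdom : B.domain = (Submodule.prod T.domain T.domain).comap (prodE H).toLinearMap)
    (hB : ∀ x : B.domain, ∀ (h1 : (prodE H (x : HxH H)).1 ∈ T.domain)
        (h2 : (prodE H (x : HxH H)).2 ∈ T.domain),
      prodE H (B x) = (T ⟨(prodE H (x : HxH H)).1, h1⟩, -T ⟨(prodE H (x : HxH H)).2, h2⟩)) :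
    B† = B := by
  have hTd : Dense (T.domain : Set H) := (isSelfAdjoint_def.mpr hT_sa).dense_domain
  have hBd : Dense (B.domain : Set (HxH H)) := by
    rw [hBdom]; exact dense_prod_comap hTd hTd
  have memB : ∀ {v : HxH H}, v ∈ B.domain →
      (prodE H v).1 ∈ T.domain ∧ (prodE H v).2 ∈ T.domain := by
    intro v hv
    rw [hBdom] at hv
    exact hv
  have hfa : B.IsFormalAdjoint B := by
    intro x y
    obtain ⟨hx1, hx2⟩ := memB x.2
    obtain ⟨hy1, hy2⟩ := memB y.2
    have hxv := hB x hx1 hx2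
    have hyv := hB y hy1 hy2
    have c1 : (prodE H (B x)).1 = T ⟨(prodE H (x : HxH H)).1, hx1⟩ := by rw [hxv]
    have c2 : (prodE H (B x)).2 = -T ⟨(prodE H (x : HxH H)).2, hx2⟩ := by rw [hxv]
    have d1 : (prodE H (B y)).1 = T ⟨(prodE H (y : HxH H)).1, hy1⟩ := by rw [hyv]
    have d2 : (prodE H (B y)).2 = -T ⟨(prodE H (y : HxH H)).2, hy2⟩ := by rw [hyv]
    calc ⟪B x, (y : HxH H)⟫
        = ⟪(prodE H (B x)).1, (prodE H (y : HxH H)).1⟫ +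
          ⟪(prodE H (B x)).2, (prodE H (y : HxH H)).2⟫ := rfl
      _ = ⟪T ⟨(prodE H (x : HxH H)).1, hx1⟩, (prodE H (y : HxH H)).1⟫ +
          -⟪T ⟨(prodE H (x : HxH H)).2, hx2⟩, (prodE H (y : HxH H)).2⟫ := by
            rw [c1, c2, inner_neg_left]
      _ = ⟪(prodE H (x : HxH H)).1, T ⟨(prodE H (y : HxH H)).1, hy1⟩⟫ +
          -⟪(prodE H (x : HxH H)).2, T ⟨(prodE H (y : HxH H)).2, hy2⟩⟫ := by
            rw [sa_symm hT_sa ⟨_, hx1⟩ ⟨_, hy1⟩, sa_symm hT_sa ⟨_, hx2⟩ ⟨_, hy2⟩]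
      _ = ⟪(prodE H (x : HxH H)).1, (prodE H (B y)).1⟫ +
          ⟪(prodE H (x : HxH H)).2, (prodE H (B y)).2⟫ := by
            rw [d1, d2, inner_neg_right]
      _ = ⟪(x : HxH H), B y⟫ := rfl
  refine le_antisymm ?_ (hfa.le_adjoint hBd)
  have main : ∀ p : B†.domain, ∃ hm : (p : HxH H) ∈ B.domain, B† p = B ⟨(p : HxH H), hm⟩ := by
    intro p
    have key := LinearPMap.adjoint_isFormalAdjoint hBd p
    have rel1 : ∀ u : T.domain, ⟪(prodE H (B† p)).1, (u : H)⟫ =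
        ⟪(prodE H (p : HxH H)).1, T u⟫ := by
      intro u
      have m1 : ((prodE H).symm ((u : H), 0) : HxH H) ∈ B.domain := by
        rw [hBdom]; exact ⟨u.2, T.domain.zero_mem⟩
      have hv := hB ⟨_, m1⟩ (u.2 : ((prodE H) ((prodE H).symm ((u : H), 0))).1 ∈ T.domain)
        T.domain.zero_mem
      have hz : T ⟨((prodE H) ((prodE H).symm ((u : H), (0 : H)))).2, T.domain.zero_mem⟩
          = 0 := by
        rw [show (⟨((prodE H) ((prodE H).symm ((u : H), (0 : H)))).2, T.domain.zero_mem⟩ :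
          T.domain) = 0 from rfl]
        exact T.map_zero
      have hTu : T ⟨((prodE H) ((prodE H).symm ((u : H), (0 : H)))).1, u.2⟩ = T u := by
        exact T.val_congr rfl _ _
      have hk := key ⟨_, m1⟩
      calc ⟪(prodE H (B† p)).1, (u : H)⟫
          = ⟪(prodE H (B† p)).1, (u : H)⟫ + ⟪(prodE H (B† p)).2, (0 : H)⟫ := by
            rw [inner_zero_right, add_zero]
        _ = ⟪B† p, ((prodE H).symm ((u : H), 0) : HxH H)⟫ := rfl
        _ = ⟪(p : HxH H), B ⟨_, m1⟩⟫ := hk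
        _ = ⟪(prodE H (p : HxH H)).1, (prodE H (B ⟨_, m1⟩)).1⟫ +
            ⟪(prodE H (p : HxH H)).2, (prodE H (B ⟨_, m1⟩)).2⟫ := rfl
        _ = ⟪(prodE H (p : HxH H)).1, T u⟫ := by
            rw [hv]
            simp only [hz, hTu]
            rw [neg_zero, inner_zero_right, add_zero]
    have rel2 : ∀ u : T.domain, ⟪-(prodE H (B† p)).2, (u : H)⟫ =
        ⟪(prodE H (p : HxH H)).2, T u⟫ := by
      intro u
      have m1 : ((prodE H).symm ((0 : H), (u : H)) : HxH H) ∈ B.domain := by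
        rw [hBdom]; exact ⟨T.domain.zero_mem, u.2⟩
      have hv := hB ⟨_, m1⟩ T.domain.zero_mem
        (u.2 : ((prodE H) ((prodE H).symm ((0 : H), (u : H)))).2 ∈ T.domain)
      have hz : T ⟨((prodE H) ((prodE H).symm ((0 : H), (u : H)))).1, T.domain.zero_mem⟩
          = 0 := by
        rw [show (⟨((prodE H) ((prodE H).symm ((0 : H), (u : H)))).1, T.domain.zero_mem⟩ :
          T.domain) = 0 from rfl]
        exact T.map_zero
      have hTu : T ⟨((prodE H) ((prodE H).symm ((0 : H), (u : H)))).2, u.2⟩ = T u := by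
        exact T.val_congr rfl _ _
      have hk := key ⟨_, m1⟩
      have step : ⟪(prodE H (B† p)).2, (u : H)⟫ = -⟪(prodE H (p : HxH H)).2, T u⟫ := by
        calc ⟪(prodE H (B† p)).2, (u : H)⟫
            = ⟪(prodE H (B† p)).1, (0 : H)⟫ + ⟪(prodE H (B† p)).2, (u : H)⟫ := by
              rw [inner_zero_right, zero_add]
          _ = ⟪B† p, ((prodE H).symm ((0 : H), (u : H)) : HxH H)⟫ := rfl
          _ = ⟪(p : HxH H), B ⟨_, m1⟩⟫ := hk
          _ = ⟪(prodE H (p : HxH H)).1, (prodE H (B ⟨_, m1⟩)).1⟫ +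
              ⟪(prodE H (p : HxH H)).2, (prodE H (B ⟨_, m1⟩)).2⟫ := rfl
          _ = -⟪(prodE H (p : HxH H)).2, T u⟫ := by
              rw [hv]
              simp only [hz, hTu]
              rw [inner_zero_right, inner_neg_right, zero_add]
      rw [inner_neg_left, step, neg_neg]
    obtain ⟨hm1, hv1⟩ := sa_mem_and_eq hT_sa rel1
    obtain ⟨hm2, hv2⟩ := sa_mem_and_eq hT_sa rel2
    have hm : (p : HxH H) ∈ B.domain := by rw [hBdom]; exact ⟨hm1, hm2⟩
    refine ⟨hm, ?_⟩
    apply (prodE H).injective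
    rw [hB ⟨(p : HxH H), hm⟩ hm1 hm2]
    refine Prod.ext (by rw [hv1]) ?_
    rw [hv2]
    simp
  refine ⟨fun v hv => (main ⟨v, hv⟩).1, ?_⟩
  intro x y hxy
  obtain ⟨hm, hv⟩ := main x
  rw [hv]
  exact B.val_congr hxy _ _

end ABHelpers
section CompHelpers

variable {H : Type} [NormedAddCommGroup H] [InnerProductSpace ℂ H] [CompleteSpace H]
  {T : H →ₗ.[ℂ] H}

omit [CompleteSpace H] in
theorem mem_dom_iff {X : HxH H →ₗ.[ℂ] HxH H}
    (hXdom : X.domain = (Submodule.prod T.domain T.domain).comap (prodE H).toLinearMap)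
    {w : HxH H} : w ∈ X.domain ↔
      ((prodE H w).1 ∈ T.domain ∧ (prodE H w).2 ∈ T.domain) := by
  rw [hXdom]; exact Iff.rfl

omit [CompleteSpace H] in
theorem dom_comp_eq {X Y : HxH H →ₗ.[ℂ] HxH H}
    (hXdom : X.domain = (Submodule.prod T.domain T.domain).comap (prodE H).toLinearMap)
    (hYdom : Y.domain = (Submodule.prod T.domain T.domain).comap (prodE H).toLinearMap)
    (hcond : ∀ v : Y.domain, ∀ (h1 : (prodE H (v : HxH H)).1 ∈ T.domain)
        (h2 : (prodE H (v : HxH H)).2 ∈ T.domain),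
      ((prodE H (Y v)).1 ∈ T.domain ∧ (prodE H (Y v)).2 ∈ T.domain) ↔
      (T ⟨(prodE H (v : HxH H)).1, h1⟩ ∈ T.domain ∧
       T ⟨(prodE H (v : HxH H)).2, h2⟩ ∈ T.domain)) :
    (pComp X Y).domain =
      (Submodule.prod (pComp T T).domain (pComp T T).domain).comap (prodE H).toLinearMap := by
  ext v
  rw [show v ∈ (pComp X Y).domain ↔ _ from mem_pComp_domain]
  constructor
  · rintro ⟨hv, hXv⟩
    have hc : (prodE H v).1 ∈ T.domain ∧ (prodE H v).2 ∈ T.domain := by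
      have h' := hv; rwa [hYdom] at h'
    have hXc : (prodE H (Y ⟨v, hv⟩)).1 ∈ T.domain ∧ (prodE H (Y ⟨v, hv⟩)).2 ∈ T.domain := by
      have h' := hXv; rwa [hXdom] at h'
    have h2 := (hcond ⟨v, hv⟩ hc.1 hc.2).mp hXc
    exact ⟨mem_pComp_domain.mpr ⟨hc.1, h2.1⟩, mem_pComp_domain.mpr ⟨hc.2, h2.2⟩⟩
  · rintro ⟨h1, h2⟩
    obtain ⟨hv1, hT1⟩ := mem_pComp_domain.mp h1
    obtain ⟨hv2, hT2⟩ := mem_pComp_domain.mp h2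
    have hv : v ∈ Y.domain := by rw [hYdom]; exact ⟨hv1, hv2⟩
    refine ⟨hv, ?_⟩
    rw [hXdom]
    exact (hcond ⟨v, hv⟩ hv1 hv2).mpr ⟨hT1, hT2⟩

omit [CompleteSpace H] in
theorem valAA {A : HxH H →ₗ.[ℂ] HxH H}
    (hAdom : A.domain = (Submodule.prod T.domain T.domain).comap (prodE H).toLinearMap)
    (hA : ∀ x : A.domain, ∀ (h1 : (prodE H (x : HxH H)).1 ∈ T.domain)
        (h2 : (prodE H (x : HxH H)).2 ∈ T.domain),
      prodE H (A x) = (T ⟨(prodE H (x : HxH H)).2, h2⟩, T ⟨(prodE H (x : HxH H)).1, h1⟩))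
    (v : HxH H) (h1 : (prodE H v).1 ∈ (pComp T T).domain)
    (h2 : (prodE H v).2 ∈ (pComp T T).domain) (hm : v ∈ (pComp A A).domain) :
    prodE H (pComp A A ⟨v, hm⟩) =
      (pComp T T ⟨(prodE H v).1, h1⟩, pComp T T ⟨(prodE H v).2, h2⟩) := by
  obtain ⟨hv1, hT1⟩ := mem_pComp_domain.mp h1
  obtain ⟨hv2, hT2⟩ := mem_pComp_domain.mp h2
  have hv : v ∈ A.domain := by rw [hAdom]; exact ⟨hv1, hv2⟩
  have hAvm : (A ⟨v, hv⟩ : HxH H) ∈ A.domain := (mem_dom_iff hAdom).mpr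
    (by rw [hA ⟨v, hv⟩ hv1 hv2]; exact ⟨hT2, hT1⟩)
  have m1 : (prodE H (A ⟨v, hv⟩ : HxH H)).1 ∈ T.domain := by
    rw [hA ⟨v, hv⟩ hv1 hv2]; exact hT2
  have m2 : (prodE H (A ⟨v, hv⟩ : HxH H)).2 ∈ T.domain := by
    rw [hA ⟨v, hv⟩ hv1 hv2]; exact hT1
  rw [pComp_apply v hv hAvm hm, hA ⟨A ⟨v, hv⟩, hAvm⟩ m1 m2,
    pComp_apply _ hv1 hT1 h1, pComp_apply _ hv2 hT2 h2]
  refine Prod.ext ?_ ?_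
  · exact T.val_congr (by rw [hA ⟨v, hv⟩ hv1 hv2]) _ _
  · exact T.val_congr (by rw [hA ⟨v, hv⟩ hv1 hv2]) _ _

omit [CompleteSpace H] in
theorem valBB {B : HxH H →ₗ.[ℂ] HxH H}
    (hBdom : B.domain = (Submodule.prod T.domain T.domain).comap (prodE H).toLinearMap)
    (hB : ∀ x : B.domain, ∀ (h1 : (prodE H (x : HxH H)).1 ∈ T.domain)
        (h2 : (prodE H (x : HxH H)).2 ∈ T.domain),
      prodE H (B x) = (T ⟨(prodE H (x : HxH H)).1, h1⟩, -T ⟨(prodE H (x : HxH H)).2, h2⟩))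
    (v : HxH H) (h1 : (prodE H v).1 ∈ (pComp T T).domain)
    (h2 : (prodE H v).2 ∈ (pComp T T).domain) (hm : v ∈ (pComp B B).domain) :
    prodE H (pComp B B ⟨v, hm⟩) =
      (pComp T T ⟨(prodE H v).1, h1⟩, pComp T T ⟨(prodE H v).2, h2⟩) := by
  obtain ⟨hv1, hT1⟩ := mem_pComp_domain.mp h1
  obtain ⟨hv2, hT2⟩ := mem_pComp_domain.mp h2
  have hv : v ∈ B.domain := by rw [hBdom]; exact ⟨hv1, hv2⟩
  have hBvm : (B ⟨v, hv⟩ : HxH H) ∈ B.domain := (mem_dom_iff hBdom).mpr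
    (by rw [hB ⟨v, hv⟩ hv1 hv2]; exact ⟨hT1, T.domain.neg_mem hT2⟩)
  have m1 : (prodE H (B ⟨v, hv⟩ : HxH H)).1 ∈ T.domain := by
    rw [hB ⟨v, hv⟩ hv1 hv2]; exact hT1
  have m2 : (prodE H (B ⟨v, hv⟩ : HxH H)).2 ∈ T.domain := by
    rw [hB ⟨v, hv⟩ hv1 hv2]; exact T.domain.neg_mem hT2
  rw [pComp_apply v hv hBvm hm, hB ⟨B ⟨v, hv⟩, hBvm⟩ m1 m2,
    pComp_apply _ hv1 hT1 h1, pComp_apply _ hv2 hT2 h2]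
  refine Prod.ext ?_ ?_
  · exact T.val_congr (by rw [hB ⟨v, hv⟩ hv1 hv2]) _ _
  · show -T ⟨(prodE H (B ⟨v, hv⟩ : HxH H)).2, m2⟩ = T ⟨T ⟨(prodE H v).2, hv2⟩, hT2⟩
    have e1 : T ⟨(prodE H (B ⟨v, hv⟩ : HxH H)).2, m2⟩ =
        T ⟨-(T ⟨(prodE H v).2, hv2⟩ : H), T.domain.neg_mem hT2⟩ :=
      T.val_congr (by rw [hB ⟨v, hv⟩ hv1 hv2]) _ _
    rw [e1, T.map_neg' _ hT2, neg_neg]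

omit [CompleteSpace H] in
theorem valAB {A B : HxH H →ₗ.[ℂ] HxH H}
    (hAdom : A.domain = (Submodule.prod T.domain T.domain).comap (prodE H).toLinearMap)
    (hA : ∀ x : A.domain, ∀ (h1 : (prodE H (x : HxH H)).1 ∈ T.domain)
        (h2 : (prodE H (x : HxH H)).2 ∈ T.domain),
      prodE H (A x) = (T ⟨(prodE H (x : HxH H)).2, h2⟩, T ⟨(prodE H (x : HxH H)).1, h1⟩))
    (hBdom : B.domain = (Submodule.prod T.domain T.domain).comap (prodE H).toLinearMap)
    (hB : ∀ x : B.domain, ∀ (h1 : (prodE H (x : HxH H)).1 ∈ T.domain)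
        (h2 : (prodE H (x : HxH H)).2 ∈ T.domain),
      prodE H (B x) = (T ⟨(prodE H (x : HxH H)).1, h1⟩, -T ⟨(prodE H (x : HxH H)).2, h2⟩))
    (v : HxH H) (h1 : (prodE H v).1 ∈ (pComp T T).domain)
    (h2 : (prodE H v).2 ∈ (pComp T T).domain) (hm : v ∈ (pComp A B).domain) :
    prodE H (pComp A B ⟨v, hm⟩) =
      (-(pComp T T ⟨(prodE H v).2, h2⟩), pComp T T ⟨(prodE H v).1, h1⟩) := by
  obtain ⟨hv1, hT1⟩ := mem_pComp_domain.mp h1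
  obtain ⟨hv2, hT2⟩ := mem_pComp_domain.mp h2
  have hv : v ∈ B.domain := by rw [hBdom]; exact ⟨hv1, hv2⟩
  have hBvm : (B ⟨v, hv⟩ : HxH H) ∈ A.domain := (mem_dom_iff hAdom).mpr
    (by rw [hB ⟨v, hv⟩ hv1 hv2]; exact ⟨hT1, T.domain.neg_mem hT2⟩)
  have m1 : (prodE H (B ⟨v, hv⟩ : HxH H)).1 ∈ T.domain := by
    rw [hB ⟨v, hv⟩ hv1 hv2]; exact hT1
  have m2 : (prodE H (B ⟨v, hv⟩ : HxH H)).2 ∈ T.domain := by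
    rw [hB ⟨v, hv⟩ hv1 hv2]; exact T.domain.neg_mem hT2
  rw [pComp_apply v hv hBvm hm, hA ⟨B ⟨v, hv⟩, hBvm⟩ m1 m2,
    pComp_apply _ hv1 hT1 h1, pComp_apply _ hv2 hT2 h2]
  refine Prod.ext ?_ ?_
  · show T ⟨(prodE H (B ⟨v, hv⟩ : HxH H)).2, m2⟩ = -T ⟨T ⟨(prodE H v).2, hv2⟩, hT2⟩
    have e1 : T ⟨(prodE H (B ⟨v, hv⟩ : HxH H)).2, m2⟩ =
        T ⟨-(T ⟨(prodE H v).2, hv2⟩ : H), T.domain.neg_mem hT2⟩ :=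
      T.val_congr (by rw [hB ⟨v, hv⟩ hv1 hv2]) _ _
    rw [e1, T.map_neg' _ hT2]
  · exact T.val_congr (by rw [hB ⟨v, hv⟩ hv1 hv2]) _ _

omit [CompleteSpace H] in
theorem valBA {A B : HxH H →ₗ.[ℂ] HxH H}
    (hAdom : A.domain = (Submodule.prod T.domain T.domain).comap (prodE H).toLinearMap)
    (hA : ∀ x : A.domain, ∀ (h1 : (prodE H (x : HxH H)).1 ∈ T.domain)
        (h2 : (prodE H (x : HxH H)).2 ∈ T.domain),
      prodE H (A x) = (T ⟨(prodE H (x : HxH H)).2, h2⟩, T ⟨(prodE H (x : HxH H)).1, h1⟩))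
    (hBdom : B.domain = (Submodule.prod T.domain T.domain).comap (prodE H).toLinearMap)
    (hB : ∀ x : B.domain, ∀ (h1 : (prodE H (x : HxH H)).1 ∈ T.domain)
        (h2 : (prodE H (x : HxH H)).2 ∈ T.domain),
      prodE H (B x) = (T ⟨(prodE H (x : HxH H)).1, h1⟩, -T ⟨(prodE H (x : HxH H)).2, h2⟩))
    (v : HxH H) (h1 : (prodE H v).1 ∈ (pComp T T).domain)
    (h2 : (prodE H v).2 ∈ (pComp T T).domain) (hm : v ∈ (pComp B A).domain) :
    prodE H (pComp B A ⟨v, hm⟩) =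
      (pComp T T ⟨(prodE H v).2, h2⟩, -(pComp T T ⟨(prodE H v).1, h1⟩)) := by
  obtain ⟨hv1, hT1⟩ := mem_pComp_domain.mp h1
  obtain ⟨hv2, hT2⟩ := mem_pComp_domain.mp h2
  have hv : v ∈ A.domain := by rw [hAdom]; exact ⟨hv1, hv2⟩
  have hAvm : (A ⟨v, hv⟩ : HxH H) ∈ B.domain := (mem_dom_iff hBdom).mpr
    (by rw [hA ⟨v, hv⟩ hv1 hv2]; exact ⟨hT2, hT1⟩)
  have m1 : (prodE H (A ⟨v, hv⟩ : HxH H)).1 ∈ T.domain := by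
    rw [hA ⟨v, hv⟩ hv1 hv2]; exact hT2
  have m2 : (prodE H (A ⟨v, hv⟩ : HxH H)).2 ∈ T.domain := by
    rw [hA ⟨v, hv⟩ hv1 hv2]; exact hT1
  rw [pComp_apply v hv hAvm hm, hB ⟨A ⟨v, hv⟩, hAvm⟩ m1 m2,
    pComp_apply _ hv1 hT1 h1, pComp_apply _ hv2 hT2 h2]
  refine Prod.ext ?_ ?_
  · exact T.val_congr (by rw [hA ⟨v, hv⟩ hv1 hv2]) _ _
  · show -T ⟨(prodE H (A ⟨v, hv⟩ : HxH H)).2, m2⟩ = -T ⟨T ⟨(prodE H v).1, hv1⟩, hT1⟩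
    rw [T.val_congr (by rw [hA ⟨v, hv⟩ hv1 hv2]) m2 hT1]

end CompHelpers

/-- Let `T` be an unbounded self-adjoint operator on a complex Hilbert space `H`.  On `H × H`
define `A` with domain `D(T) × D(T)` by `A (x, y) = (T y, T x)` and `B` with domain
`D(T) × D(T)` by `B (x, y) = (T x, -T y)`.  Then `A` and `B` are self-adjoint with
`D(A) = D(B)`, `A ∘ A = B ∘ B` (both given by `(x, y) ↦ ((T∘T) x, (T∘T) y)` on
`D(T∘T) × D(T∘T)`), so `A ∘ A - B ∘ B` is the zero operator on its domain, while
`A ∘ B - B ∘ A` has domain `D(T∘T) × D(T∘T)`, is given by `(x, y) ↦ (-2(T∘T) y, 2(T∘T) x)`,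
and is unbounded. -/
theorem stmt_13 {H : Type} [NormedAddCommGroup H] [InnerProductSpace ℂ H] [CompleteSpace H]
    (T : H →ₗ.[ℂ] H) (hT_sa : T† = T) (hT_unb : ¬ IsBddOp T)
    (A B : HxH H →ₗ.[ℂ] HxH H)
    (hAdom : A.domain = (Submodule.prod T.domain T.domain).comap (prodE H).toLinearMap)
    (hA : ∀ x : A.domain, ∀ (h1 : (prodE H (x : HxH H)).1 ∈ T.domain)
        (h2 : (prodE H (x : HxH H)).2 ∈ T.domain),
      prodE H (A x) = (T ⟨(prodE H (x : HxH H)).2, h2⟩, T ⟨(prodE H (x : HxH H)).1, h1⟩))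
    (hBdom : B.domain = (Submodule.prod T.domain T.domain).comap (prodE H).toLinearMap)
    (hB : ∀ x : B.domain, ∀ (h1 : (prodE H (x : HxH H)).1 ∈ T.domain)
        (h2 : (prodE H (x : HxH H)).2 ∈ T.domain),
      prodE H (B x) = (T ⟨(prodE H (x : HxH H)).1, h1⟩, -T ⟨(prodE H (x : HxH H)).2, h2⟩)) :
    A† = A ∧ B† = B ∧ A.domain = B.domain ∧
    pComp A A = pComp B B ∧
    (pComp A A).domain =
      (Submodule.prod (pComp T T).domain (pComp T T).domain).comap (prodE H).toLinearMap ∧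
    (∀ z : (pComp A A).domain, ∀ (h1 : (prodE H (z : HxH H)).1 ∈ (pComp T T).domain)
        (h2 : (prodE H (z : HxH H)).2 ∈ (pComp T T).domain),
      prodE H (pComp A A z) =
        (pComp T T ⟨(prodE H (z : HxH H)).1, h1⟩, pComp T T ⟨(prodE H (z : HxH H)).2, h2⟩)) ∧
    (∀ z : (pComp A A - pComp B B).domain, (pComp A A - pComp B B) z = 0) ∧
    (pComp A B - pComp B A).domain =
      (Submodule.prod (pComp T T).domain (pComp T T).domain).comap (prodE H).toLinearMap ∧
    (∀ z : (pComp A B - pComp B A).domain,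
      ∀ (h1 : (prodE H (z : HxH H)).1 ∈ (pComp T T).domain)
        (h2 : (prodE H (z : HxH H)).2 ∈ (pComp T T).domain),
      prodE H ((pComp A B - pComp B A) z) =
        ((-2 : ℂ) • pComp T T ⟨(prodE H (z : HxH H)).2, h2⟩,
         (2 : ℂ) • pComp T T ⟨(prodE H (z : HxH H)).1, h1⟩)) ∧
    ¬ IsBddOp (pComp A B - pComp B A) := by

  have condA : ∀ v : A.domain, ∀ (h1 : (prodE H (v : HxH H)).1 ∈ T.domain)
      (h2 : (prodE H (v : HxH H)).2 ∈ T.domain),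
      ((prodE H (A v)).1 ∈ T.domain ∧ (prodE H (A v)).2 ∈ T.domain) ↔
      (T ⟨(prodE H (v : HxH H)).1, h1⟩ ∈ T.domain ∧
       T ⟨(prodE H (v : HxH H)).2, h2⟩ ∈ T.domain) := by
    intro v h1 h2
    rw [hA v h1 h2]
    exact and_comm
  have condB : ∀ v : B.domain, ∀ (h1 : (prodE H (v : HxH H)).1 ∈ T.domain)
      (h2 : (prodE H (v : HxH H)).2 ∈ T.domain),
      ((prodE H (B v)).1 ∈ T.domain ∧ (prodE H (B v)).2 ∈ T.domain) ↔
      (T ⟨(prodE H (v : HxH H)).1, h1⟩ ∈ T.domain ∧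
       T ⟨(prodE H (v : HxH H)).2, h2⟩ ∈ T.domain) := by
    intro v h1 h2
    rw [hB v h1 h2]
    constructor
    · rintro ⟨a, b⟩
      exact ⟨a, by simpa using T.domain.neg_mem b⟩
    · rintro ⟨a, b⟩
      exact ⟨a, T.domain.neg_mem b⟩
  have domAA := dom_comp_eq hAdom hAdom condA
  have domBB := dom_comp_eq hBdom hBdom condB
  have domAB := dom_comp_eq hAdom hBdom condB
  have domBA := dom_comp_eq hBdom hAdom condA
  have h4 : pComp A A = pComp B B := by
    refine LinearPMap.ext (domAA.trans domBB.symm) ?_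
    intro x₀ hx₀ hy₀
    set x : (pComp A A).domain := ⟨x₀, hx₀⟩
    set y : (pComp B B).domain := ⟨x₀, hy₀⟩
    have hxy : (x : HxH H) = y := rfl
    obtain ⟨h1, h2⟩ := (mem_dom_iff (T := pComp T T) domAA).mp x.2
    have hy1 : (prodE H (y : HxH H)).1 ∈ (pComp T T).domain := by rw [← hxy]; exact h1
    have hy2 : (prodE H (y : HxH H)).2 ∈ (pComp T T).domain := by rw [← hxy]; exact h2
    apply (prodE H).injective
    calc prodE H (pComp A A x)
        = (pComp T T ⟨(prodE H (x : HxH H)).1, h1⟩,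
           pComp T T ⟨(prodE H (x : HxH H)).2, h2⟩) := valAA hAdom hA _ h1 h2 x.2
      _ = (pComp T T ⟨(prodE H (y : HxH H)).1, hy1⟩,
           pComp T T ⟨(prodE H (y : HxH H)).2, hy2⟩) :=
          Prod.ext ((pComp T T).val_congr (by rw [hxy]) _ _)
            ((pComp T T).val_congr (by rw [hxy]) _ _)
      _ = prodE H (pComp B B y) := (valBB hBdom hB _ hy1 hy2 y.2).symm
  have dom89 : (pComp A B - pComp B A).domain =
      (Submodule.prod (pComp T T).domain (pComp T T).domain).comap (prodE H).toLinearMap := by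
    have hsub : (pComp A B - pComp B A).domain = (pComp A B).domain ⊓ (pComp B A).domain := rfl
    rw [hsub, domAB, domBA, inf_idem]
  have val9 : ∀ z : (pComp A B - pComp B A).domain,
      ∀ (h1 : (prodE H (z : HxH H)).1 ∈ (pComp T T).domain)
        (h2 : (prodE H (z : HxH H)).2 ∈ (pComp T T).domain),
      prodE H ((pComp A B - pComp B A) z) =
        ((-2 : ℂ) • pComp T T ⟨(prodE H (z : HxH H)).2, h2⟩,
         (2 : ℂ) • pComp T T ⟨(prodE H (z : HxH H)).1, h1⟩) := by
    intro z h1 h2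
    have hz1 : (z : HxH H) ∈ (pComp A B).domain := z.2.1
    have hz2 : (z : HxH H) ∈ (pComp B A).domain := z.2.2
    have e1 := valAB hAdom hA hBdom hB _ h1 h2 hz1
    have e2 := valBA hAdom hA hBdom hB _ h1 h2 hz2
    calc prodE H ((pComp A B - pComp B A) z)
        = prodE H (pComp A B ⟨(z : HxH H), hz1⟩ - pComp B A ⟨(z : HxH H), hz2⟩) := rfl
      _ = prodE H (pComp A B ⟨(z : HxH H), hz1⟩) -
          prodE H (pComp B A ⟨(z : HxH H), hz2⟩) := by rw [_root_.map_sub]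
      _ = (-(pComp T T ⟨(prodE H (z : HxH H)).2, h2⟩) -
             pComp T T ⟨(prodE H (z : HxH H)).2, h2⟩,
           pComp T T ⟨(prodE H (z : HxH H)).1, h1⟩ -
             -(pComp T T ⟨(prodE H (z : HxH H)).1, h1⟩)) := by
          rw [e1, e2, Prod.mk_sub_mk]
      _ = ((-2 : ℂ) • pComp T T ⟨(prodE H (z : HxH H)).2, h2⟩,
           (2 : ℂ) • pComp T T ⟨(prodE H (z : HxH H)).1, h1⟩) := by
          refine Prod.ext ?_ ?_ <;> · show _ = _ ; module
  refine ⟨adjoint_eq_A hT_sa hAdom hA, adjoint_eq_B hT_sa hBdom hB, by rw [hAdom, hBdom],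
    h4, domAA, ?_, ?_, dom89, val9, ?_⟩
  · intro z h1 h2
    exact valAA hAdom hA _ h1 h2 z.2
  · intro z
    have heq : pComp A A ⟨(z : HxH H), z.2.1⟩ = pComp B B ⟨(z : HxH H), z.2.2⟩ :=
      LinearPMap.apply_congr h4 ⟨(z : HxH H), z.2.1⟩ z.2.2
    calc (pComp A A - pComp B B) z
        = pComp A A ⟨(z : HxH H), z.2.1⟩ - pComp B B ⟨(z : HxH H), z.2.2⟩ := rfl
      _ = 0 := by rw [heq, sub_self]
  -- unboundedness
  rintro ⟨C, hC0, hC⟩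
  apply hT_unb
  have hTT : ∀ w : (pComp T T).domain, ‖pComp T T w‖ ≤ (C / 2) * ‖(w : H)‖ := by
    intro w
    have hmz : ((prodE H).symm ((w : H), 0) : HxH H) ∈ (pComp A B - pComp B A).domain := by
      rw [dom89]
      exact ⟨w.2, (pComp T T).domain.zero_mem⟩
    set z : ↥(pComp A B - pComp B A).domain := ⟨(prodE H).symm ((w : H), 0), hmz⟩ with hzdef
    have h1 : (prodE H (z : HxH H)).1 ∈ (pComp T T).domain := w.2
    have h2 : (prodE H (z : HxH H)).2 ∈ (pComp T T).domain := (pComp T T).domain.zero_mem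
    have hval := val9 z h1 h2
    have c2 : pComp T T ⟨(prodE H (z : HxH H)).2, h2⟩ = 0 := by
      rw [show (⟨(prodE H (z : HxH H)).2, h2⟩ : (pComp T T).domain) = 0 from rfl]
      exact (pComp T T).map_zero
    have c1 : pComp T T ⟨(prodE H (z : HxH H)).1, h1⟩ = pComp T T w :=
      (pComp T T).val_congr rfl _ _
    rw [c1, c2, smul_zero] at hval
    have hnz : ‖(z : HxH H)‖ = ‖(w : H)‖ := by
      rw [WithLp.prod_norm_eq_of_L2]
      have : ((z : HxH H).snd : H) = 0 := rfl
      rw [show ‖(z : HxH H).fst‖ = ‖(w : H)‖ from rfl, this]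
      simp [Real.sqrt_sq (norm_nonneg _)]
    have hnv : ‖(pComp A B - pComp B A) z‖ = 2 * ‖pComp T T w‖ := by
      have hv' : (pComp A B - pComp B A) z =
          (prodE H).symm (0, (2 : ℂ) • pComp T T w) := by
        apply (prodE H).injective
        rw [hval, LinearEquiv.apply_symm_apply]
      rw [hv', WithLp.prod_norm_eq_of_L2]
      rw [show ‖((prodE H).symm ((0 : H), (2 : ℂ) • pComp T T w) : HxH H).fst‖ = ‖(0 : H)‖
        from rfl]
      rw [show ((prodE H).symm ((0 : H), (2 : ℂ) • pComp T T w) : HxH H).snd =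
        (2 : ℂ) • pComp T T w from rfl]
      rw [norm_zero, norm_smul, show ‖(2 : ℂ)‖ = 2 from by norm_num]
      rw [show (0 : ℝ) ^ 2 + (2 * ‖pComp T T w‖) ^ 2 = (2 * ‖pComp T T w‖) ^ 2 from by ring]
      exact Real.sqrt_sq (by positivity)
    have hineq := hC z
    rw [hnv, hnz] at hineq
    linarith
  have hC2 : (0 : ℝ) ≤ C / 2 := by positivity
  set M := Real.sqrt (C / 2) with hMdef
  have hM : 0 ≤ M := Real.sqrt_nonneg _
  have step1 : ∀ (w : H) (hw : w ∈ T.domain), w ∈ (pComp T T).domain →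
      ‖T ⟨w, hw⟩‖ ≤ M * ‖w‖ := by
    intro w hw hww
    obtain ⟨hw', hTw⟩ := mem_pComp_domain.mp hww
    have hinner : (inner ℂ (T ⟨w, hw⟩) (T ⟨w, hw⟩) : ℂ) =
        inner ℂ (w : H) (pComp T T ⟨w, hww⟩) := by
      rw [pComp_apply w hw (by exact T.val_congr rfl hw hw' ▸ hTw) hww]
      have := sa_symm hT_sa ⟨w, hw⟩ ⟨T ⟨w, hw⟩, T.val_congr rfl hw hw' ▸ hTw⟩
      simpa using this
    have hb1 : ‖T ⟨w, hw⟩‖ ^ 2 ≤ ‖w‖ * ‖pComp T T ⟨w, hww⟩‖ := by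
      calc ‖T ⟨w, hw⟩‖ ^ 2
          = RCLike.re (inner ℂ (T ⟨w, hw⟩) (T ⟨w, hw⟩) : ℂ) := (inner_self_eq_norm_sq _).symm
        _ = RCLike.re (inner ℂ (w : H) (pComp T T ⟨w, hww⟩) : ℂ) := by rw [hinner]
        _ ≤ ‖(inner ℂ (w : H) (pComp T T ⟨w, hww⟩) : ℂ)‖ := RCLike.re_le_norm _
        _ ≤ ‖w‖ * ‖pComp T T ⟨w, hww⟩‖ := norm_inner_le_norm _ _
    have hb2 : ‖T ⟨w, hw⟩‖ ^ 2 ≤ (C / 2) * ‖w‖ ^ 2 := by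
      have h5 := hTT ⟨w, hww⟩
      nlinarith [norm_nonneg w, norm_nonneg (pComp T T ⟨w, hww⟩)]
    have hb3 : ‖T ⟨w, hw⟩‖ ^ 2 ≤ (M * ‖w‖) ^ 2 := by
      rw [mul_pow, hMdef, Real.sq_sqrt hC2]
      exact hb2
    have hb4 := Real.sqrt_le_sqrt hb3
    rwa [Real.sqrt_sq (norm_nonneg _), Real.sqrt_sq (by positivity)] at hb4
  refine ⟨M, hM, ?_⟩
  intro x
  have hS : ∀ y : H, ‖(inner ℂ (T x) y : ℂ)‖ ≤ M * ‖(x : H)‖ * ‖y‖ := by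
    have hsub : ((pComp T T).domain : Set H) ⊆
        {y : H | ‖(inner ℂ (T x) y : ℂ)‖ ≤ M * ‖(x : H)‖ * ‖y‖} := by
      intro y hy
      obtain ⟨hyT, hTy⟩ := mem_pComp_domain.mp hy
      have e1 : (inner ℂ (T x) y : ℂ) = inner ℂ ((x : H)) (T ⟨y, hyT⟩) := by
        have := sa_symm hT_sa x ⟨y, hyT⟩
        simpa using this
      rw [Set.mem_setOf_eq, e1]
      calc ‖(inner ℂ ((x : H)) (T ⟨y, hyT⟩) : ℂ)‖
          ≤ ‖(x : H)‖ * ‖T ⟨y, hyT⟩‖ := norm_inner_le_norm _ _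
        _ ≤ ‖(x : H)‖ * (M * ‖y‖) :=
            mul_le_mul_of_nonneg_left (step1 y hyT hy) (norm_nonneg _)
        _ = M * ‖(x : H)‖ * ‖y‖ := by ring
    have hclosed : IsClosed {y : H | ‖(inner ℂ (T x) y : ℂ)‖ ≤ M * ‖(x : H)‖ * ‖y‖} := by
      apply isClosed_le
      · exact (innerSL ℂ (T x)).continuous.norm
      · exact continuous_const.mul continuous_norm
    intro y
    have hmem : y ∈ closure ((pComp T T).domain : Set H) := by
      rw [(dense_sq hT_sa).closure_eq]
      trivial
    exact closure_minimal hsub hclosed hmem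
  have hTx := hS (T x)
  have e2 : ‖T x‖ ^ 2 ≤ ‖(inner ℂ (T x) (T x) : ℂ)‖ := by
    rw [← inner_self_eq_norm_sq (𝕜 := ℂ)]
    exact RCLike.re_le_norm _
  by_cases h0 : ‖T x‖ = 0
  · rw [h0]
    positivity
  · have hpos : 0 < ‖T x‖ := lt_of_le_of_ne (norm_nonneg _) (Ne.symm h0)
    nlinarith
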